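/- arXiv:1509.07292 — 3 statements merged into one kernel-verified Lean document; each statement's English description precedes it below -/
import Mathlib

section
/- Let K, ε, T ≥ 0. Let D₁, D₂ : [0,T] → ℂ^{d×d} be continuous matrix-valued functions with ‖D₁(s) − D₂(s)‖ ≤ ε for all s ∈ [0,T], where ‖·‖ is the operator norm. Let M₁, M₂ : [0,T] → ℂ^{d×d} be differentiable with Mᵢ'(s) = −Mᵢ(s)² − Dᵢ(s) and ‖Mᵢ(s)‖ ≤ K for all s ∈ [0,T] and i = 1, 2, and suppose M₁(0) = M₂(0). Then for all s ∈ [0,T]: ‖M₁(s) − M₂(s)‖ ≤ ε · s · e^{2K·s}. -/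
set_option synthInstance.maxHeartbeats 1000000

lemma gb_aux (K ε s : ℝ) (hK : 0 ≤ K) (hε : 0 ≤ ε) (hs : 0 ≤ s) :
    gronwallBound 0 (2 * K) ε s ≤ ε * s * Real.exp (2 * K * s) := by
  rcases eq_or_lt_of_le hK with h | h
  · subst h
    simp [gronwallBound, Real.exp_nonneg]
  · have h2K : (2 * K) ≠ 0 := by positivity
    rw [gronwallBound_of_K_ne_0 h2K]
    have hx : 0 ≤ 2 * K * s := by positivity
    have key : Real.exp (2 * K * s) - 1 ≤ (2 * K * s) * Real.exp (2 * K * s) := by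
      have := Real.add_one_le_exp (-(2 * K * s))
      have h1 : 1 - 2 * K * s ≤ Real.exp (-(2 * K * s)) := by linarith
      have h2 : Real.exp (-(2 * K * s)) * Real.exp (2 * K * s) = 1 := by
        rw [← Real.exp_add]; simp
      nlinarith [Real.exp_pos (2 * K * s), mul_le_mul_of_nonneg_right h1 (Real.exp_pos (2 * K * s)).le]
    have hdiv : ε / (2 * K) * (Real.exp (2 * K * s) - 1)
        ≤ ε / (2 * K) * ((2 * K * s) * Real.exp (2 * K * s)) := by
      apply mul_le_mul_of_nonneg_left key (by positivity)
    calc 0 * Real.exp (2 * K * s) + ε / (2 * K) * (Real.exp (2 * K * s) - 1)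
        ≤ ε / (2 * K) * ((2 * K * s) * Real.exp (2 * K * s)) := by linarith
      _ = ε * s * Real.exp (2 * K * s) := by field_simp

/-- Gronwall stability for matrix Riccati equations: two bounded solutions of
`M' = −M² − Dᵢ(s)` (operators on `ℂ^d`, operator norm) with the same initial
data and `ε`-close inhomogeneities satisfy `‖M₁(s) − M₂(s)‖ ≤ ε·s·e^{2Ks}`. -/
theorem stmt_7 (d : ℕ) (K ε T : ℝ) (hK : 0 ≤ K) (hε : 0 ≤ ε) (hT : 0 ≤ T)
    (D₁ D₂ M₁ M₂ : ℝ →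
      (EuclideanSpace ℂ (Fin d) →L[ℂ] EuclideanSpace ℂ (Fin d)))
    (hD₁ : ContinuousOn D₁ (Set.Icc 0 T)) (hD₂ : ContinuousOn D₂ (Set.Icc 0 T))
    (hDclose : ∀ s ∈ Set.Icc (0 : ℝ) T, ‖D₁ s - D₂ s‖ ≤ ε)
    (hM₁ : ∀ s ∈ Set.Icc (0 : ℝ) T,
      HasDerivAt M₁ (-(M₁ s ∘L M₁ s) - D₁ s) s)
    (hM₂ : ∀ s ∈ Set.Icc (0 : ℝ) T,
      HasDerivAt M₂ (-(M₂ s ∘L M₂ s) - D₂ s) s)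
    (hM₁bd : ∀ s ∈ Set.Icc (0 : ℝ) T, ‖M₁ s‖ ≤ K)
    (hM₂bd : ∀ s ∈ Set.Icc (0 : ℝ) T, ‖M₂ s‖ ≤ K)
    (h0 : M₁ 0 = M₂ 0) :
    ∀ s ∈ Set.Icc (0 : ℝ) T, ‖M₁ s - M₂ s‖ ≤ ε * s * Real.exp (2 * K * s) := by
  set f := fun s => M₁ s - M₂ s with hf
  set f' := fun s => (-(M₁ s ∘L M₁ s) - D₁ s) - (-(M₂ s ∘L M₂ s) - D₂ s) with hf'
  have hderiv : ∀ s ∈ Set.Icc (0 : ℝ) T, HasDerivAt f (f' s) s :=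
    fun s hs => (hM₁ s hs).sub (hM₂ s hs)
  have hcont : ContinuousOn f (Set.Icc 0 T) :=
    fun s hs => ((hderiv s hs).continuousAt).continuousWithinAt
  have key := norm_le_gronwallBound_of_norm_deriv_right_le (f := f) (f' := f')
    (δ := 0) (K := 2 * K) (ε := ε) (a := 0) (b := T) hcont
    (fun s hs => (hderiv s (Set.Ico_subset_Icc_self hs)).hasDerivWithinAt)
    (by simp [hf, h0])
    (fun s hs => by
      have hs' : s ∈ Set.Icc (0 : ℝ) T := Set.Ico_subset_Icc_self hs
      have hsq : M₁ s ∘L M₁ s - M₂ s ∘L M₂ s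
          = M₁ s ∘L (M₁ s - M₂ s) + (M₁ s - M₂ s) ∘L M₂ s := by
        ext v
        simp [ContinuousLinearMap.sub_apply, map_sub]
      have h1 : ‖M₁ s ∘L (M₁ s - M₂ s)‖ ≤ K * ‖f s‖ :=
        le_trans (ContinuousLinearMap.opNorm_comp_le _ _)
          (mul_le_mul_of_nonneg_right (hM₁bd s hs') (norm_nonneg _))
      have h2 : ‖(M₁ s - M₂ s) ∘L M₂ s‖ ≤ ‖f s‖ * K :=
        le_trans (ContinuousLinearMap.opNorm_comp_le _ _)
          (mul_le_mul_of_nonneg_left (hM₂bd s hs') (norm_nonneg _))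
      have heq : f' s = -(M₁ s ∘L (M₁ s - M₂ s) + (M₁ s - M₂ s) ∘L M₂ s)
          - (D₁ s - D₂ s) := by
        rw [hf', ← hsq]; abel
      calc ‖f' s‖ ≤ ‖M₁ s ∘L (M₁ s - M₂ s) + (M₁ s - M₂ s) ∘L M₂ s‖ + ‖D₁ s - D₂ s‖ := by
            rw [heq]; exact (norm_sub_le _ _).trans (by rw [norm_neg])
        _ ≤ (K * ‖f s‖ + ‖f s‖ * K) + ε := by
            have := norm_add_le (M₁ s ∘L (M₁ s - M₂ s)) ((M₁ s - M₂ s) ∘L M₂ s)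
            have := hDclose s hs'
            linarith
        _ = 2 * K * ‖f s‖ + ε := by ring)
  intro s hs
  exact le_trans (by simpa using key s hs) (gb_aux K ε s hK hε hs.1)
end

section
/- Let T > 0, let q : ℝ^d → ℝ be continuous, let H₀ ∈ ℝ, and let γ : [0,T] → ℝ^d be continuously differentiable with (1/2)|γ'(t)|² + q(γ(t)) = H₀ and q(γ(t)) < H₀ for all t ∈ [0,T]. Define s(t) = ∫₀ᵗ 2(H₀ − q(γ(u))) du, a strictly increasing bijection from [0,T] onto [0, s(T)] with inverse t(·). Then the reparametrized curve σ(u) := γ(t(u)) is differentiable on (0, s(T)) and satisfies 2·(H₀ − q(σ(u)))·|σ'(u)|² = 1 for all u ∈ (0, s(T)). -/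
/-- Maupertuis principle (Euclidean case): if `γ` has energy
`(1/2)|γ'|² + q(γ) = H₀`, then after the reparametrization
`s(t) = ∫₀ᵗ 2(H₀ − q(γ(u))) du` the curve `σ(u) = γ(t(u))` has unit speed
for the conformal metric `2(H₀ − q)·g_Euclidean`:
`2(H₀ − q(σ(u)))·|σ'(u)|² = 1`. -/
theorem stmt_9 (d : ℕ) (T : ℝ) (hT : 0 < T)
    (q : EuclideanSpace ℝ (Fin d) → ℝ) (hq : Continuous q) (H₀ : ℝ)
    (γ γ' : ℝ → EuclideanSpace ℝ (Fin d))
    (hγ : ∀ t ∈ Set.Icc (0 : ℝ) T, HasDerivAt γ (γ' t) t)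
    (hγ' : ContinuousOn γ' (Set.Icc 0 T))
    (henergy : ∀ t ∈ Set.Icc (0 : ℝ) T,
      (1 / 2) * ‖γ' t‖ ^ 2 + q (γ t) = H₀)
    (hsub : ∀ t ∈ Set.Icc (0 : ℝ) T, q (γ t) < H₀)
    (S : ℝ → ℝ) (hS : ∀ t, S t = ∫ u in (0 : ℝ)..t, 2 * (H₀ - q (γ u)))
    (τ : ℝ → ℝ)
    (hτ₁ : ∀ t ∈ Set.Icc (0 : ℝ) T, τ (S t) = t)
    (hτ₂ : ∀ u ∈ Set.Icc (0 : ℝ) (S T), S (τ u) = u ∧ τ u ∈ Set.Icc (0 : ℝ) T) :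
    ∀ u ∈ Set.Ioo (0 : ℝ) (S T),
      ∃ σ' : EuclideanSpace ℝ (Fin d),
        HasDerivAt (fun v => γ (τ v)) σ' u ∧
        2 * (H₀ - q (γ (τ u))) * ‖σ'‖ ^ 2 = 1 := by
  intro u hu
  have huIcc : u ∈ Set.Icc (0 : ℝ) (S T) := ⟨hu.1.le, hu.2.le⟩
  obtain ⟨hSτ, ht₀⟩ := hτ₂ u huIcc
  set f : ℝ → ℝ := fun t => 2 * (H₀ - q (γ t)) with hf_def
  have hfc : ∀ t ∈ Set.Icc (0 : ℝ) T, ContinuousAt f t := by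
    intro t ht
    exact ((hq.continuousAt.comp (hγ t ht).continuousAt).const_sub H₀).const_mul 2
  have fpos : ∀ t ∈ Set.Icc (0 : ℝ) T, 0 < f t := by
    intro t ht
    have := hsub t ht
    simp only [hf_def]
    linarith
  have hInt : ∀ a ∈ Set.Icc (0 : ℝ) T, ∀ b ∈ Set.Icc (0 : ℝ) T,
      IntervalIntegrable f MeasureTheory.volume a b := by
    intro a ha b hb
    apply ContinuousOn.intervalIntegrable
    intro x hx
    have hx' : x ∈ Set.Icc (0 : ℝ) T := by
      have : Set.uIcc a b ⊆ Set.Icc (0 : ℝ) T := by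
        rw [← Set.uIcc_of_le hT.le]
        exact Set.uIcc_subset_uIcc (by rwa [Set.uIcc_of_le hT.le])
          (by rwa [Set.uIcc_of_le hT.le])
      exact this hx
    exact (hfc x hx').continuousWithinAt
  have hS0 : S 0 = 0 := by rw [hS]; simp
  have hSmono : StrictMonoOn S (Set.Icc (0 : ℝ) T) := by
    intro a ha b hb hab
    have hadd : S a + ∫ x in a..b, f x = S b := by
      rw [hS, hS]
      exact intervalIntegral.integral_add_adjacent_intervals
        (hInt 0 (Set.left_mem_Icc.2 hT.le) a ha) (hInt a ha b hb)
    have hpos : 0 < ∫ x in a..b, f x := by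
      apply intervalIntegral.intervalIntegral_pos_of_pos_on (hInt a ha b hb) _ hab
      intro x hx
      exact fpos x ⟨ha.1.trans hx.1.le, hx.2.le.trans hb.2⟩
    linarith
  have ht₀o : τ u ∈ Set.Ioo (0 : ℝ) T := by
    constructor
    · rcases eq_or_lt_of_le ht₀.1 with h | h
      · exact absurd (hSτ.symm.trans (by rw [← h, hS0])) hu.1.ne'
      · exact h
    · rcases eq_or_lt_of_le ht₀.2 with h | h
      · exact absurd (hSτ.symm.trans (by rw [h])) hu.2.ne
      · exact h
  have hSmem : ∀ t ∈ Set.Icc (0 : ℝ) T, S t ∈ Set.Icc (0 : ℝ) (S T) := by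
    intro t ht
    constructor
    · rw [← hS0]
      exact hSmono.monotoneOn (Set.left_mem_Icc.2 hT.le) ht ht.1
    · exact hSmono.monotoneOn ht (Set.right_mem_Icc.2 hT.le) ht.2
  have hτmono : StrictMonoOn τ (Set.Icc (0 : ℝ) (S T)) := by
    intro a ha b hb hab
    obtain ⟨hSa, hτa⟩ := hτ₂ a ha
    obtain ⟨hSb, hτb⟩ := hτ₂ b hb
    by_contra h
    push_neg at h
    have := hSmono.monotoneOn hτb hτa h
    rw [hSa, hSb] at this
    exact absurd this (not_le.2 hab)
  have hτcont : ContinuousAt τ u := by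
    apply hτmono.continuousAt_of_image_mem_nhds (Icc_mem_nhds hu.1 hu.2)
    apply Filter.mem_of_superset (Icc_mem_nhds ht₀o.1 ht₀o.2)
    intro t ht
    exact ⟨S t, hSmem t ht, hτ₁ t ht⟩
  have hSd : HasDerivAt S (f (τ u)) (τ u) := by
    have hmeas : StronglyMeasurableAtFilter f (nhds (τ u)) MeasureTheory.volume := by
      refine ContinuousAt.stronglyMeasurableAtFilter isOpen_Ioo
        (fun x hx => hfc x (Set.Ioo_subset_Icc_self hx)) (τ u) ht₀o
    have h := intervalIntegral.integral_hasDerivAt_right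
      (hInt 0 (Set.left_mem_Icc.2 hT.le) (τ u) (Set.Ioo_subset_Icc_self ht₀o))
      hmeas (hfc (τ u) (Set.Ioo_subset_Icc_self ht₀o))
    have hSeq : S = fun t => ∫ x in (0 : ℝ)..t, f x := funext hS
    rw [hSeq]
    exact h
  have hτd : HasDerivAt τ (f (τ u))⁻¹ u := by
    apply HasDerivAt.of_local_left_inverse hτcont hSd
      (ne_of_gt (fpos (τ u) (Set.Ioo_subset_Icc_self ht₀o)))
    filter_upwards [Ioo_mem_nhds hu.1 hu.2] with v hv
    exact (hτ₂ v (Set.Ioo_subset_Icc_self hv)).1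
  have hσd : HasDerivAt (fun v => γ (τ v)) ((f (τ u))⁻¹ • γ' (τ u)) u :=
    (hγ (τ u) (Set.Ioo_subset_Icc_self ht₀o)).scomp u hτd
  refine ⟨_, hσd, ?_⟩
  have hE : ‖γ' (τ u)‖ ^ 2 = f (τ u) := by
    have := henergy (τ u) (Set.Ioo_subset_Icc_self ht₀o)
    simp only [hf_def]
    linarith
  have hpos := fpos (τ u) (Set.Ioo_subset_Icc_self ht₀o)
  show f (τ u) * _ = 1
  rw [norm_smul, Real.norm_eq_abs, abs_of_pos (inv_pos.2 hpos), mul_pow, hE]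
  field_simp
end

section
/- Let N be a natural number and l an integer with l ≥ −2 and N − 2l − 2 ≥ 0, let c > 0, let ρ : ℝ^d → [0,∞) be any function, and for each integer j with −2 ≤ j ≤ l let C_j ≥ 0 and c_j : ℝ^d → ℂ satisfy |c_j(x)| ≤ C_j · ρ(x)^{N−2j−2} for all x ∈ ℝ^d. Then for every λ ≥ 1 and every x ∈ ℝ^d: |Σ_{j=−2}^{l} c_j(x)·λ^{−j}| · exp(−λ·c·ρ(x)²) ≤ K · λ^{1 − N/2} · exp(−λ·c·ρ(x)²/2), where K = Σ_{j=−2}^{l} C_j · ((N−2j−2)/e)^{(N−2j−2)/2} · c^{−(N−2j−2)/2} (with the convention 0⁰ = 1). -/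
lemma key_ineq (q a s : ℝ) (hq : 0 ≤ q) (ha : 0 < a) (hs : 0 ≤ s) :
    s ^ q * Real.exp (-(a * s) / 2) ≤ (2 * q / Real.exp 1) ^ q * a ^ (-q) := by
  rcases eq_or_lt_of_le hq with hq0 | hq0
  · subst hq0
    simp only [Real.rpow_zero, one_mul, neg_zero, mul_one]
    exact Real.exp_le_one_iff.2 (by nlinarith)
  rcases eq_or_lt_of_le hs with hs0 | hs0
  · subst hs0
    rw [Real.zero_rpow (ne_of_gt hq0), zero_mul]
    positivity
  have h2q : 0 < 2 * q := by linarith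
  have hbase : 0 < 2 * q / Real.exp 1 := div_pos h2q (Real.exp_pos 1)
  have hlog := Real.log_le_sub_one_of_pos (show 0 < s * a / (2 * q) by positivity)
  rw [Real.log_div (by positivity) (ne_of_gt h2q), Real.log_mul (ne_of_gt hs0) (ne_of_gt ha)]
    at hlog
  have hq' := mul_le_mul_of_nonneg_left hlog (le_of_lt hq0)
  have hdiv : q * (s * a / (2 * q)) = a * s / 2 := by field_simp
  have key : Real.log s * q - a * s / 2 ≤
      Real.log (2 * q / Real.exp 1) * q + Real.log a * (-q) := by
    rw [Real.log_div (ne_of_gt h2q) (ne_of_gt (Real.exp_pos 1)), Real.log_exp]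
    nlinarith [hq', hdiv]
  calc s ^ q * Real.exp (-(a * s) / 2)
      = Real.exp (Real.log s * q - a * s / 2) := by
        rw [Real.rpow_def_of_pos hs0, ← Real.exp_add]; ring_nf
    _ ≤ Real.exp (Real.log (2 * q / Real.exp 1) * q + Real.log a * (-q)) :=
        Real.exp_le_exp.2 key
    _ = (2 * q / Real.exp 1) ^ q * a ^ (-q) := by
        rw [Real.exp_add, Real.rpow_def_of_pos hbase, Real.rpow_def_of_pos ha]


/-- Pointwise Gaussian beam error estimate: if each coefficient `c_j` vanishes
to order `N − 2j − 2` (i.e. `|c_j(x)| ≤ C_j ρ(x)^{N−2j−2}`), then the residual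
`|Σ_j c_j(x) λ^{−j}| e^{−λcρ²}` is bounded by `K λ^{1−N/2} e^{−λcρ²/2}` with
`K = Σ_j C_j ((N−2j−2)/e)^{(N−2j−2)/2} c^{−(N−2j−2)/2}`. -/
theorem stmt_12 (N : ℕ) (l : ℤ) (hl : -2 ≤ l) (hNl : 0 ≤ (N : ℤ) - 2 * l - 2)
    (c : ℝ) (hc : 0 < c) (d : ℕ)
    (ρ : (Fin d → ℝ) → ℝ) (hρ : ∀ x, 0 ≤ ρ x)
    (Cb : ℤ → ℝ) (f : ℤ → (Fin d → ℝ) → ℂ)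
    (hCb : ∀ j ∈ Finset.Icc (-2 : ℤ) l, 0 ≤ Cb j)
    (hf : ∀ j ∈ Finset.Icc (-2 : ℤ) l, ∀ x,
      ‖f j x‖ ≤ Cb j * ρ x ^ ((N : ℝ) - 2 * (j : ℝ) - 2)) :
    ∀ lam : ℝ, 1 ≤ lam → ∀ x : Fin d → ℝ,
      ‖∑ j ∈ Finset.Icc (-2 : ℤ) l, f j x * (lam : ℂ) ^ (-j)‖ *
          Real.exp (-(lam * c * ρ x ^ 2)) ≤
        (∑ j ∈ Finset.Icc (-2 : ℤ) l,
            Cb j * (((N : ℝ) - 2 * (j : ℝ) - 2) / Real.exp 1) ^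
                (((N : ℝ) - 2 * (j : ℝ) - 2) / 2) *
              c ^ (-(((N : ℝ) - 2 * (j : ℝ) - 2) / 2))) *
          lam ^ ((1 : ℝ) - (N : ℝ) / 2) * Real.exp (-(lam * c * ρ x ^ 2) / 2) := by
  intro lam hlam x
  have hlam0 : (0 : ℝ) < lam := lt_of_lt_of_le one_pos hlam
  set E : ℝ := Real.exp (-(lam * c * ρ x ^ 2)) with hE
  set E2 : ℝ := Real.exp (-(lam * c * ρ x ^ 2) / 2) with hE2
  have hEsq : E = E2 * E2 := by rw [hE, hE2, ← Real.exp_add]; ring_nf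
  have hterm : ∀ j ∈ Finset.Icc (-2 : ℤ) l,
      ‖f j x * (lam : ℂ) ^ (-j)‖ * E ≤
      Cb j * (((N : ℝ) - 2 * (j : ℝ) - 2) / Real.exp 1) ^
          (((N : ℝ) - 2 * (j : ℝ) - 2) / 2) *
        c ^ (-(((N : ℝ) - 2 * (j : ℝ) - 2) / 2)) *
        (lam ^ ((1 : ℝ) - (N : ℝ) / 2) * E2) := by
    intro j hj
    set p : ℝ := (N : ℝ) - 2 * (j : ℝ) - 2 with hpdef
    have hjl : j ≤ l := (Finset.mem_Icc.mp hj).2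
    have hp : 0 ≤ p := by
      have : (j : ℝ) ≤ (l : ℝ) := by exact_mod_cast hjl
      have h2 : (0 : ℝ) ≤ (N : ℝ) - 2 * (l : ℝ) - 2 := by exact_mod_cast hNl
      rw [hpdef]; linarith
    have habs : ‖f j x * (lam : ℂ) ^ (-j)‖ =
        ‖f j x‖ * lam ^ ((-j : ℤ) : ℝ) := by
      rw [norm_mul, ← Complex.ofReal_zpow, Complex.norm_real, Real.norm_eq_abs,
        abs_of_pos (zpow_pos hlam0 _), ← Real.rpow_intCast]
    -- core inequality from key_ineq
    have hkey := key_ineq (p / 2) (lam * c) (ρ x ^ 2) (by linarith) (by positivity)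
      (by positivity)
    have hρp : ρ x ^ p = (ρ x ^ 2) ^ (p / 2) := by
      rw [← Real.rpow_natCast (ρ x) 2, ← Real.rpow_mul (hρ x)]
      congr 1
      push_cast; ring
    have h2p : 2 * (p / 2) = p := by ring
    rw [h2p, Real.mul_rpow (le_of_lt hlam0) (le_of_lt hc)] at hkey
    have hcore : ρ x ^ p * E2 ≤
        (p / Real.exp 1) ^ (p / 2) * (lam ^ (-(p / 2)) * c ^ (-(p / 2))) := by
      rw [hρp, hE2]; exact hkey
    -- exponent bookkeeping
    have hexp : lam ^ ((-j : ℤ) : ℝ) * lam ^ (-(p / 2)) =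
        lam ^ ((1 : ℝ) - (N : ℝ) / 2) := by
      rw [← Real.rpow_add hlam0]
      congr 1
      rw [hpdef]; push_cast; ring
    calc ‖f j x * (lam : ℂ) ^ (-j)‖ * E
        = ‖f j x‖ * lam ^ ((-j : ℤ) : ℝ) * (E2 * E2) := by
          rw [habs, hEsq]
      _ ≤ (Cb j * ρ x ^ p) * lam ^ ((-j : ℤ) : ℝ) * (E2 * E2) := by
          exact mul_le_mul_of_nonneg_right
            (mul_le_mul_of_nonneg_right (hf j hj x) (by positivity)) (by positivity)
      _ = Cb j * lam ^ ((-j : ℤ) : ℝ) * E2 * (ρ x ^ p * E2) := by ring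
      _ ≤ Cb j * lam ^ ((-j : ℤ) : ℝ) * E2 *
            ((p / Real.exp 1) ^ (p / 2) * (lam ^ (-(p / 2)) * c ^ (-(p / 2)))) := by
          have hC := hCb j hj
          have h1 : 0 ≤ Cb j * lam ^ ((-j : ℤ) : ℝ) * E2 := by positivity
          exact mul_le_mul_of_nonneg_left hcore h1
      _ = Cb j * (p / Real.exp 1) ^ (p / 2) * c ^ (-(p / 2)) *
            ((lam ^ ((-j : ℤ) : ℝ) * lam ^ (-(p / 2))) * E2) := by ring
      _ = Cb j * (p / Real.exp 1) ^ (p / 2) * c ^ (-(p / 2)) *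
            (lam ^ ((1 : ℝ) - (N : ℝ) / 2) * E2) := by rw [hexp]
  calc ‖∑ j ∈ Finset.Icc (-2 : ℤ) l, f j x * (lam : ℂ) ^ (-j)‖ * E
      ≤ (∑ j ∈ Finset.Icc (-2 : ℤ) l, ‖f j x * (lam : ℂ) ^ (-j)‖) * E :=
        mul_le_mul_of_nonneg_right
          (norm_sum_le _ _) (Real.exp_nonneg _)
    _ = ∑ j ∈ Finset.Icc (-2 : ℤ) l, ‖f j x * (lam : ℂ) ^ (-j)‖ * E := by
        rw [Finset.sum_mul]
    _ ≤ ∑ j ∈ Finset.Icc (-2 : ℤ) l,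
          Cb j * (((N : ℝ) - 2 * (j : ℝ) - 2) / Real.exp 1) ^
              (((N : ℝ) - 2 * (j : ℝ) - 2) / 2) *
            c ^ (-(((N : ℝ) - 2 * (j : ℝ) - 2) / 2)) *
            (lam ^ ((1 : ℝ) - (N : ℝ) / 2) * E2) := Finset.sum_le_sum hterm
    _ = (∑ j ∈ Finset.Icc (-2 : ℤ) l,
          Cb j * (((N : ℝ) - 2 * (j : ℝ) - 2) / Real.exp 1) ^
              (((N : ℝ) - 2 * (j : ℝ) - 2) / 2) *
            c ^ (-(((N : ℝ) - 2 * (j : ℝ) - 2) / 2))) *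
          lam ^ ((1 : ℝ) - (N : ℝ) / 2) * E2 := by
        rw [Finset.sum_mul, Finset.sum_mul]
        exact Finset.sum_congr rfl fun j _ => by ring
end
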